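/- Define normalized polynomials ĴJ^m_{a,b} = J^m_{a,b} / ([a-b]_t!·[b-m]_t!·[m]_t!). Then they satisfy the recurrence ĴJ^m_{a,b} = ĴJ^{m-1}_{a-1,b-1} + t^{b-m}·ĴJ^m_{a-1,b} + t^m·[a-b+1]_t·ĴJ^m_{a,b-1} + q·[m+1]_t·ĴJ^{m+1}_{a,b}. -/
import Mathlib


open Polynomial

noncomputable section

/-- The t-analog `[k]_t = 1 + t + ... + t^(k-1)`. -/
def tA (k : ℕ) : Polynomial ℤ := ∑ i ∈ Finset.range k, Polynomial.X ^ i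

/-- The t-factorial `[k]_t! = [1]_t [2]_t ⋯ [k]_t`. -/
def tF (k : ℕ) : Polynomial ℤ := ∏ j ∈ Finset.range k, tA (j + 1)

/-- Embed `ℤ[t]` into `ℤ[t][q]` (outer variable `q`, inner variable `t`). -/
def ct : Polynomial ℤ →+* Polynomial (Polynomial ℤ) := Polynomial.C

/-- The variable `q` in `ℤ[t][q]`. -/
def qv : Polynomial (Polynomial ℤ) := Polynomial.X

/-- The variable `t` in `ℤ[t][q]`. -/
def tv : Polynomial (Polynomial ℤ) := Polynomial.C Polynomial.X

/-- `[k]_t` as an element of `ℤ[t][q]`, indexed by an integer (zero for `k ≤ 0`). -/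
def tAZ (k : ℤ) : Polynomial (Polynomial ℤ) := ct (tA k.toNat)

/-- `t^k` as an element of `ℤ[t][q]`, indexed by an integer. -/
def tpow (k : ℤ) : Polynomial (Polynomial ℤ) := ct (Polynomial.X ^ k.toNat)

/-- `[k]_t!` as an element of `ℤ[t][q]`, indexed by an integer. -/
def tFZ (k : ℤ) : Polynomial (Polynomial ℤ) := ct (tF k.toNat)

/-- `C(k,2) = k(k-1)/2`. -/
def choose2 (k : ℤ) : ℤ := k * (k - 1) / 2

/-- The coefficient of `t^i q^j` in `P ∈ ℤ[t][q]`, with value `0` for negative indices. -/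
def coeffQT (P : Polynomial (Polynomial ℤ)) (i j : ℤ) : ℤ :=
  if 0 ≤ i ∧ 0 ≤ j then (P.coeff j.toNat).coeff i.toNat else 0

/-- The kicking recurrence:
`J^m_{a,b} = [m]_t J^{m-1}_{a-1,b-1} + t^{b-m}[a-b]_t J^m_{a-1,b}
  + t^m [b-m]_t J^m_{a,b-1} + q [b-m]_t J^{m+1}_{a,b}`. -/
def KickRec (J : ℤ → ℤ → ℤ → Polynomial (Polynomial ℤ)) : Prop :=
  ∀ a b m : ℤ, b < a → m < b → 0 ≤ m →
    J a b m = tAZ m * J (a - 1) (b - 1) (m - 1)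
      + tpow (b - m) * tAZ (a - b) * J (a - 1) b m
      + tpow m * tAZ (b - m) * J a (b - 1) m
      + qv * tAZ (b - m) * J a b (m + 1)

/-- The initial conditions: `J^b_{a,b} = C(a,b) [b]_t! [a-b]_t!`, `J^m_{b,b} = J^0_{b,b-m}`,
and `J^m_{a,b} = 0` unless `a ≥ b ≥ m ≥ 0`. -/
def KickInit (J : ℤ → ℤ → ℤ → Polynomial (Polynomial ℤ)) : Prop :=
  (∀ a b : ℤ, 0 ≤ b → b ≤ a →
      J a b b = (a.toNat.choose b.toNat : Polynomial (Polynomial ℤ)) * tFZ b * tFZ (a - b)) ∧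
  (∀ b m : ℤ, 0 ≤ m → m ≤ b → J b b m = J b (b - m) 0) ∧
  (∀ a b m : ℤ, ¬(0 ≤ m ∧ m ≤ b ∧ b ≤ a) → J a b m = 0)

/-- The second kicking recurrence. -/
def KickRec2 (J : ℤ → ℤ → ℤ → Polynomial (Polynomial ℤ)) : Prop :=
  ∀ a b m : ℤ, b < a → m < b → 0 ≤ m →
    J a b m = tpow (b - m) * tAZ m * J (a - 1) (b - 1) (m - 1)
      + tAZ (a - b) * J (a - 1) b m
      + qv * tAZ (b - m) * J a (b - 1) m
      + tpow (a - b) * tAZ (b - m) * J a b (m + 1)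

lemma tA_succ_ne_zero (n : ℕ) : tA (n+1) ≠ 0 := by
  intro h
  have h1 := congrArg (Polynomial.eval 1) h
  simp [tA, Polynomial.eval_finset_sum] at h1
  omega

lemma tF_ne_zero (n : ℕ) : tF n ≠ 0 := by
  unfold tF
  exact Finset.prod_ne_zero_iff.mpr (fun j _ => tA_succ_ne_zero j)

lemma tFZ_ne_zero (k : ℤ) : tFZ k ≠ 0 := by
  unfold tFZ ct
  simpa using tF_ne_zero k.toNat

lemma tFZ_succ (k : ℤ) (hk : 0 ≤ k) : tFZ (k+1) = tAZ (k+1) * tFZ k := by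
  unfold tFZ tAZ tF
  have h1 : (k+1).toNat = k.toNat + 1 := by omega
  rw [h1, Finset.prod_range_succ, map_mul, mul_comm]

lemma tAZ_zero : tAZ 0 = 0 := by simp [tAZ, tA, ct]

/-- the normalized polynomials `Ĵ^m_{a,b} = J^m_{a,b}/([a-b]_t![b-m]_t![m]_t!)`
satisfy `Ĵ^m_{a,b} = Ĵ^{m-1}_{a-1,b-1} + t^{b-m} Ĵ^m_{a-1,b}
+ t^m [a-b+1]_t Ĵ^m_{a,b-1} + q [m+1]_t Ĵ^{m+1}_{a,b}`. -/
theorem Jhat_first_recurrence (J Jh : ℤ → ℤ → ℤ → Polynomial (Polynomial ℤ))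
    (hrec : KickRec J) (hinit : KickInit J)
    (hJh : ∀ a b m : ℤ, J a b m = tFZ (a - b) * tFZ (b - m) * tFZ m * Jh a b m) :
    ∀ a b m : ℤ, b < a → m < b → 0 ≤ m →
      Jh a b m = Jh (a - 1) (b - 1) (m - 1)
        + tpow (b - m) * Jh (a - 1) b m
        + tpow m * tAZ (a - b + 1) * Jh a (b - 1) m
        + qv * tAZ (m + 1) * Jh a b (m + 1) := by
  intro a b m hba hmb hm
  have key := hrec a b m hba hmb hm
  rw [hJh a b m, hJh (a-1) (b-1) (m-1), hJh (a-1) b m, hJh a (b-1) m, hJh a b (m+1)] at key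
  have ea : a - 1 - (b - 1) = a - b := by ring
  have eb : b - 1 - (m - 1) = b - m := by ring
  have ec : a - 1 - b = a - b - 1 := by ring
  have ed : b - 1 - m = b - m - 1 := by ring
  have ee : b - (m+1) = b - m - 1 := by ring
  have ef : a - (b-1) = a - b + 1 := by ring
  rw [ea, eb, ec, ed, ee, ef] at key
  have e4 : tFZ (a - b + 1) = tAZ (a-b+1) * tFZ (a-b) := tFZ_succ _ (by omega)
  have e5 : tFZ (m + 1) = tAZ (m+1) * tFZ m := tFZ_succ _ hm
  have e2 : tFZ (a - b) = tAZ (a-b) * tFZ (a-b-1) := by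
    have h := tFZ_succ (a-b-1) (by omega); rw [sub_add_cancel] at h
    convert h using 2 <;> ring
  have e3 : tFZ (b - m) = tAZ (b-m) * tFZ (b-m-1) := by
    have h := tFZ_succ (b-m-1) (by omega); rw [sub_add_cancel] at h
    convert h using 2 <;> ring
  have hF : tFZ (a-b) * tFZ (b-m) * tFZ m ≠ 0 :=
    mul_ne_zero (mul_ne_zero (tFZ_ne_zero _) (tFZ_ne_zero _)) (tFZ_ne_zero _)
  apply mul_left_cancel₀ hF
  rcases eq_or_lt_of_le hm with hm0 | hm1
  · -- m = 0 case
    have hJ0 : Jh (a-1) (b-1) (m-1) = 0 := by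
      have h0 := hinit.2.2 (a-1) (b-1) (m-1) (by omega)
      rw [hJh] at h0
      rcases mul_eq_zero.mp h0 with h | h
      · exact absurd h (mul_ne_zero (mul_ne_zero (tFZ_ne_zero _) (tFZ_ne_zero _)) (tFZ_ne_zero _))
      · exact h
    rw [hJ0] at key ⊢
    rw [← hm0] at key e3 e5 ⊢
    rw [tAZ_zero] at key
    rw [e4, e5] at key
    rw [e2, e3] at key ⊢
    linear_combination key
  · have e1 : tFZ m = tAZ m * tFZ (m-1) := by
      have h := tFZ_succ (m-1) (by omega); rw [sub_add_cancel] at h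
      exact h
    rw [e4, e5] at key
    rw [e1, e2, e3] at key ⊢
    linear_combination key
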